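/- Let k ≥ 1 and D ≥ 0, let T̃ be the complete k-ary tree of depth D with root λ, with parameters h_u ∈ [0,1] on the nodes and h_u = 0 for every node at depth D. Define φ recursively on the nodes of T̃ by φ(u) := 1 if u is at depth D, and φ(u) := max{1 − h_u, h_u · ∏_{i=0}^{k−1} φ(u_{child,i})} otherwise, where u_{child,0}, …, u_{child,k−1} are the children of u in T̃. Then max over all full subtrees T of T̃ of the weight ∏_{u ∈ L^T}(1 − h_u) · ∏_{u' ∈ I^T} h_{u'} equals φ(λ). In particular, with h_u taken to be the sequentially updated hyperparameters g_{u|t} of the quadtree mixture algorithm (k = 4), the maximum a posteriori model probability max_{m} p(m | v^t) equals φ_t(s_λ). -/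

import Mathlib

inductive FullTree (k : ℕ) : ℕ → Type where
  | leaf {D : ℕ} : FullTree k D
  | node {D : ℕ} (c : Fin k → FullTree k D) : FullTree k (D + 1)

namespace FullTree

def equivZero (k : ℕ) : FullTree k 0 ≃ Unit where
  toFun _ := ()
  invFun _ := .leaf
  left_inv t := by cases t; rfl
  right_inv _ := rfl

def equivSucc (k D : ℕ) : FullTree k (D + 1) ≃ Option (Fin k → FullTree k D) where
  toFun t := match t with
    | .leaf => none
    | .node c => some c
  invFun o := match o with
    | none => .leaf
    | some c => .node c
  left_inv t := by cases t <;> rfl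
  right_inv o := by cases o <;> rfl

instance instFintype (k : ℕ) : (D : ℕ) → Fintype (FullTree k D)
  | 0 => Fintype.ofEquiv Unit (equivZero k).symm
  | (D + 1) => letI := instFintype k D; Fintype.ofEquiv _ (equivSucc k D).symm

noncomputable instance (k D : ℕ) : DecidableEq (FullTree k D) := Classical.decEq _

/-- The set of (paths to) leaf nodes of a full subtree whose root has path `u`. -/
def leaves {k : ℕ} : {D : ℕ} → List (Fin k) → FullTree k D → Finset (List (Fin k))
  | _, u, .leaf => {u}
  | _, u, .node c => Finset.univ.biUnion fun i => leaves (u ++ [i]) (c i)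

/-- The set of (paths to) inner nodes of a full subtree whose root has path `u`. -/
def inners {k : ℕ} : {D : ℕ} → List (Fin k) → FullTree k D → Finset (List (Fin k))
  | _, _, .leaf => ∅
  | _, u, .node c => insert u (Finset.univ.biUnion fun i => inners (u ++ [i]) (c i))

/-- The weight ∏_{u ∈ L^T} (1 - g u) * ∏_{u ∈ I^T} g u of a full subtree rooted at path `u`. -/
noncomputable def weight {k D : ℕ} (g : List (Fin k) → ℝ) (u : List (Fin k))
    (T : FullTree k D) : ℝ :=
  (∏ s ∈ leaves u T, (1 - g s)) * ∏ s ∈ inners u T, g s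

end FullTree

namespace FullTree

/-- Follow the path `p` down the full subtree `T` (whose root has path `u`) until a leaf of
`T` is reached; returns the path of that leaf.  For a pixel `p` (a path of full length
`dmax`), `leafOf [] m p` is the unique leaf block `s_m` of `m` containing the pixel `p`. -/
def leafOf {k : ℕ} : {D : ℕ} → List (Fin k) → FullTree k D → List (Fin k) → List (Fin k)
  | _, u, .leaf, _ => u
  | _, u, .node _, [] => u
  | _, u, .node c, i :: p => leafOf (u ++ [i]) (c i) p

end FullTree

/-- The likelihood `p(v^{t-1} | m) = ∏_{i < t} q̃(v_i | v^{i-1}, s_m(i))` of the first `t`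
pixel values under model `m`, where `qt i s x = q̃(x | v^{i-1}, s)` is the per-block
predictive pmf and `s_m(i)` the unique leaf of `m` containing pixel `i`. -/
noncomputable def like (dmax : ℕ) {V : Type} (qt : ℕ → List (Fin 4) → V → ℝ)
    (v : ℕ → V) (pix : ℕ → List (Fin 4)) (m : FullTree 4 dmax) (t : ℕ) : ℝ :=
  ∏ i ∈ Finset.range t, qt i (FullTree.leafOf [] m (pix i)) (v i)

/-- `Qd dmax qt v pix G t j` is the recursively mixed coding probability
`q(v_t | v^{t-1}, s)` at the block `s = (pix t).take (dmax - j)` on the path `S_t` of blocks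
containing pixel `t` (`j` is the distance from `s` down to the singleton block of `S_t`),
computed with the current weights `G = g_{·|t-1}`:
`q = q̃` at singleton blocks and `q = (1 - g_{s|t-1}) q̃ + g_{s|t-1} q(child)` otherwise. -/
noncomputable def Qd (dmax : ℕ) {V : Type} (qt : ℕ → List (Fin 4) → V → ℝ)
    (v : ℕ → V) (pix : ℕ → List (Fin 4)) (G : List (Fin 4) → ℝ) (t : ℕ) : ℕ → ℝ
  | 0 => qt t ((pix t).take dmax) (v t)
  | j + 1 =>
    (1 - G ((pix t).take (dmax - (j + 1)))) * qt t ((pix t).take (dmax - (j + 1))) (v t)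
      + G ((pix t).take (dmax - (j + 1))) * Qd dmax qt v pix G t j

/-- One step of the weight update: `g_{s|t} = g_{s|t-1}` if `s ∉ S_t` or `|s| = 1`
(`s ∈ S_t` iff `s` is a prefix of the pixel path `pix t`; `|s| = 1` iff `s.length = dmax`),
and `g_{s|t} = g_{s|t-1} · q(v_t | v^{t-1}, s_child) / q(v_t | v^{t-1}, s)` otherwise. -/
noncomputable def Gnext (dmax : ℕ) {V : Type} (qt : ℕ → List (Fin 4) → V → ℝ)
    (v : ℕ → V) (pix : ℕ → List (Fin 4)) (G : List (Fin 4) → ℝ) (t : ℕ)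
    (s : List (Fin 4)) : ℝ :=
  if s <+: pix t ∧ s.length < dmax then
    G s * Qd dmax qt v pix G t (dmax - s.length - 1) / Qd dmax qt v pix G t (dmax - s.length)
  else G s

/-- `GT dmax qt v pix g t s = g_{s|t-1}`: the sequentially updated weights, with
`GT ... 0 s = g_{s|-1} = g s`. -/
noncomputable def GT (dmax : ℕ) {V : Type} (qt : ℕ → List (Fin 4) → V → ℝ)
    (v : ℕ → V) (pix : ℕ → List (Fin 4)) (g : List (Fin 4) → ℝ) : ℕ → List (Fin 4) → ℝ
  | 0 => g
  | t + 1 => Gnext dmax qt v pix (GT dmax qt v pix g t) t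

/-- `phi k h j u` is the recursively defined value `φ(u)` at the node with path `u` of the
complete `k`-ary tree, where `j` is the remaining depth below `u` (so `j = 0` at the deepest
level, where `φ(u) := 1`), and otherwise
`φ(u) := max (1 - h u) (h u * ∏_{i} φ(u ++ [i]))`. -/
noncomputable def phi (k : ℕ) (h : List (Fin k) → ℝ) : ℕ → List (Fin k) → ℝ
  | 0, _ => 1
  | j + 1, u => max (1 - h u) (h u * ∏ i : Fin k, phi k h j (u ++ [i]))

namespace FullTree

variable {k : ℕ}

theorem mem_leaves_prefix : ∀ {D : ℕ} (u : List (Fin k)) (T : FullTree k D)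
    (s : List (Fin k)), s ∈ leaves u T → u <+: s
  | _, u, .leaf, s, hs => by
      simp [leaves] at hs; simp [hs]
  | _, u, .node c, s, hs => by
      simp only [leaves, Finset.mem_biUnion, Finset.mem_univ, true_and] at hs
      obtain ⟨i, hi⟩ := hs
      exact ((u.prefix_append [i]).trans (mem_leaves_prefix _ _ _ hi))

theorem mem_inners_prefix : ∀ {D : ℕ} (u : List (Fin k)) (T : FullTree k D)
    (s : List (Fin k)), s ∈ inners u T → u <+: s
  | _, u, .leaf, s, hs => by simp [inners] at hs
  | _, u, .node c, s, hs => by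
      simp only [inners, Finset.mem_insert, Finset.mem_biUnion, Finset.mem_univ,
        true_and] at hs
      rcases hs with rfl | ⟨i, hi⟩
      · exact List.prefix_refl _
      · exact ((u.prefix_append [i]).trans (mem_inners_prefix _ _ _ hi))

theorem mem_leaves_length : ∀ {D : ℕ} (u : List (Fin k)) (T : FullTree k D)
    (s : List (Fin k)), s ∈ leaves u T → s.length ≤ u.length + D
  | _, u, .leaf, s, hs => by simp [leaves] at hs; simp [hs]
  | _, u, .node c, s, hs => by
      simp only [leaves, Finset.mem_biUnion, Finset.mem_univ, true_and] at hs
      obtain ⟨i, hi⟩ := hs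
      have := mem_leaves_length _ _ _ hi
      simp at this; omega

theorem mem_inners_length : ∀ {D : ℕ} (u : List (Fin k)) (T : FullTree k D)
    (s : List (Fin k)), s ∈ inners u T → s.length < u.length + D
  | _, u, .leaf, s, hs => by simp [inners] at hs
  | _, u, .node c, s, hs => by
      simp only [inners, Finset.mem_insert, Finset.mem_biUnion, Finset.mem_univ,
        true_and] at hs
      rcases hs with rfl | ⟨i, hi⟩
      · omega
      · have := mem_inners_length _ _ _ hi; simp at this; omega

theorem getElem?_of_append_singleton_prefix {u s : List (Fin k)} {i : Fin k}
    (h : (u ++ [i]) <+: s) : s[u.length]? = some i := by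
  obtain ⟨r, hr⟩ := h
  subst hr
  rw [List.append_assoc, List.getElem?_append_right le_rfl]
  simp

theorem disj_children {u : List (Fin k)} {i j : Fin k} (hij : i ≠ j)
    {A B : Finset (List (Fin k))} (hA : ∀ s ∈ A, (u ++ [i]) <+: s)
    (hB : ∀ s ∈ B, (u ++ [j]) <+: s) : Disjoint A B := by
  rw [Finset.disjoint_left]
  intro s hsA hsB
  have h1 := getElem?_of_append_singleton_prefix (hA s hsA)
  have h2 := getElem?_of_append_singleton_prefix (hB s hsB)
  rw [h1] at h2
  exact hij (Option.some_injective _ h2)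

theorem weight_leaf {D : ℕ} (h : List (Fin k) → ℝ) (u : List (Fin k)) :
    weight h u (.leaf : FullTree k D) = 1 - h u := by
  simp [weight, leaves, inners]

theorem weight_node {D : ℕ} (h : List (Fin k) → ℝ) (u : List (Fin k))
    (c : Fin k → FullTree k D) :
    weight h u (.node c) = h u * ∏ i : Fin k, weight h (u ++ [i]) (c i) := by
  classical
  have hdisjL : (↑(Finset.univ : Finset (Fin k)) : Set (Fin k)).PairwiseDisjoint
      (fun i => leaves (u ++ [i]) (c i)) := by
    intro i _ j _ hij
    exact disj_children hij (fun s hs => mem_leaves_prefix _ _ _ hs)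
      (fun s hs => mem_leaves_prefix _ _ _ hs)
  have hdisjI : (↑(Finset.univ : Finset (Fin k)) : Set (Fin k)).PairwiseDisjoint
      (fun i => inners (u ++ [i]) (c i)) := by
    intro i _ j _ hij
    exact disj_children hij (fun s hs => mem_inners_prefix _ _ _ hs)
      (fun s hs => mem_inners_prefix _ _ _ hs)
  have hu : u ∉ Finset.univ.biUnion fun i => inners (u ++ [i]) (c i) := by
    intro hu
    simp only [Finset.mem_biUnion, Finset.mem_univ, true_and] at hu
    obtain ⟨i, hi⟩ := hu
    have := (mem_inners_prefix _ _ _ hi).length_le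
    simp at this
  show ((∏ s ∈ Finset.univ.biUnion fun i => leaves (u ++ [i]) (c i), (1 - h s)) *
    ∏ s ∈ insert u (Finset.univ.biUnion fun i => inners (u ++ [i]) (c i)), h s) = _
  rw [Finset.prod_insert hu, Finset.prod_biUnion hdisjL, Finset.prod_biUnion hdisjI]
  have hw : ∀ i : Fin k, weight h (u ++ [i]) (c i) =
      (∏ s ∈ leaves (u ++ [i]) (c i), (1 - h s)) * ∏ s ∈ inners (u ++ [i]) (c i), h s :=
    fun i => rfl
  rw [Finset.prod_congr rfl fun i _ => hw i, Finset.prod_mul_distrib]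
  ring

theorem weight_congr {D : ℕ} {h h' : List (Fin k) → ℝ} (u : List (Fin k))
    (T : FullTree k D) (he : ∀ s, u <+: s → h s = h' s) :
    weight h u T = weight h' u T := by
  unfold weight
  congr 1
  · exact Finset.prod_congr rfl fun s hs => by rw [he s (mem_leaves_prefix _ _ _ hs)]
  · exact Finset.prod_congr rfl fun s hs => by rw [he s (mem_inners_prefix _ _ _ hs)]

theorem weight_nonneg {D : ℕ} {h : List (Fin k) → ℝ} {u : List (Fin k)}
    (T : FullTree k D)
    (hh : ∀ s, u <+: s → s.length ≤ u.length + D → h s ∈ Set.Icc (0:ℝ) 1) :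
    0 ≤ weight h u T := by
  unfold weight
  apply mul_nonneg <;> apply Finset.prod_nonneg <;> intro s hs
  · have h1 := mem_leaves_prefix _ _ _ hs
    have h2 := mem_leaves_length _ _ _ hs
    have := (hh s h1 h2).2; linarith
  · have h1 := mem_inners_prefix _ _ _ hs
    have h2 := mem_inners_length _ _ _ hs
    exact (hh s h1 (le_of_lt h2)).1

end FullTree
namespace FullTree

variable {k : ℕ}

instance instNonempty (k D : ℕ) : Nonempty (FullTree k D) := ⟨.leaf⟩

/-- Decomposition of a sum over `FullTree k (D+1)`. -/
theorem sum_succ {D : ℕ} (f : FullTree k (D + 1) → ℝ) :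
    ∑ T : FullTree k (D + 1), f T = f .leaf + ∑ c : Fin k → FullTree k D, f (.node c) := by
  rw [Fintype.sum_equiv (equivSucc k D) f (fun o => f ((equivSucc k D).symm o))
    (fun T => by simp), Fintype.sum_option]
  rfl

/-- Decomposition of a `sup'` over `FullTree k (D+1)`. -/
theorem sup'_succ {D : ℕ} (f : FullTree k (D + 1) → ℝ) :
    Finset.univ.sup' ⟨.leaf, Finset.mem_univ _⟩ f
      = max (f .leaf)
        (Finset.univ.sup' ⟨fun _ => .leaf, Finset.mem_univ _⟩ fun c => f (.node c)) := by
  apply le_antisymm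
  · apply Finset.sup'_le
    intro T _
    cases T with
    | leaf => exact le_max_left _ _
    | node c =>
        exact le_trans (Finset.le_sup' (fun c => f (.node c)) (Finset.mem_univ c))
          (le_max_right _ _)
  · apply max_le
    · exact Finset.le_sup' f (Finset.mem_univ _)
    · exact Finset.sup'_le _ _ fun c _ => Finset.le_sup' f (Finset.mem_univ _)

theorem sup'_univ_zero (f : FullTree k 0 → ℝ) :
    Finset.univ.sup' ⟨.leaf, Finset.mem_univ _⟩ f = f .leaf := by
  apply le_antisymm
  · apply Finset.sup'_le
    intro T _
    cases T
    exact le_rfl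
  · exact Finset.le_sup' f (Finset.mem_univ _)

theorem sum_univ_zero (f : FullTree k 0 → ℝ) :
    ∑ T : FullTree k 0, f T = f .leaf := by
  rw [Fintype.sum_equiv (equivZero k) f (fun _ => f .leaf)
    (fun T => by cases T; rfl)]
  simp

/-- Sup of a product of nonnegative functions over independent coordinates. -/
theorem sup'_prod_eq {α : Type*} [Fintype α] [Nonempty α] (f : Fin k → α → ℝ)
    (hf : ∀ i a, 0 ≤ f i a) :
    (Finset.univ.sup' Finset.univ_nonempty fun c : Fin k → α => ∏ i, f i (c i))
      = ∏ i, Finset.univ.sup' Finset.univ_nonempty (f i) := by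
  apply le_antisymm
  · apply Finset.sup'_le
    intro c _
    exact Finset.prod_le_prod (fun i _ => hf i (c i))
      (fun i _ => Finset.le_sup' (f i) (Finset.mem_univ (c i)))
  · choose a ha1 ha2 using fun i : Fin k =>
      Finset.exists_mem_eq_sup' (Finset.univ_nonempty (α := α)) (f i)
    calc ∏ i, Finset.univ.sup' Finset.univ_nonempty (f i) = ∏ i, f i (a i) := by
            exact Finset.prod_congr rfl fun i _ => ha2 i
      _ ≤ _ := Finset.le_sup' (fun c : Fin k → α => ∏ i, f i (c i)) (Finset.mem_univ a)

theorem mul_sup' {α : Type*} [Fintype α] [Nonempty α] (a : ℝ) (ha : 0 ≤ a) (f : α → ℝ) :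
    a * Finset.univ.sup' Finset.univ_nonempty f
      = Finset.univ.sup' Finset.univ_nonempty fun x => a * f x :=
  Finset.comp_sup'_eq_sup'_comp _ (fun x => a * x) fun x y => mul_max_of_nonneg x y ha

/-- Part (i), generalized. -/
theorem sup'_weight (h : List (Fin k) → ℝ) : ∀ (D : ℕ) (u : List (Fin k)),
    (∀ s, u <+: s → s.length ≤ u.length + D → h s ∈ Set.Icc (0:ℝ) 1) →
    (∀ s, u <+: s → s.length = u.length + D → h s = 0) →
    (Finset.univ.sup' ⟨.leaf, Finset.mem_univ _⟩ fun T : FullTree k D => weight h u T)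
      = phi k h D u
  | 0, u, hIcc, h0 => by
      rw [sup'_univ_zero, weight_leaf, h0 u (List.prefix_refl u) (by omega)]
      simp [phi]
  | D + 1, u, hIcc, h0 => by
      have hchild : ∀ i : Fin k,
          (Finset.univ.sup' ⟨.leaf, Finset.mem_univ _⟩
            fun T : FullTree k D => weight h (u ++ [i]) T) = phi k h D (u ++ [i]) := by
        intro i
        refine sup'_weight h D (u ++ [i]) (fun s hp hl => ?_) (fun s hp hl => ?_)
        · exact hIcc s ((u.prefix_append [i]).trans hp) (by simp at hl ⊢; omega)
        · exact h0 s ((u.prefix_append [i]).trans hp) (by simp at hl ⊢; omega)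
      rw [sup'_succ]
      have hne : (Finset.univ : Finset (Fin k → FullTree k D)).Nonempty :=
        ⟨fun _ => .leaf, Finset.mem_univ _⟩
      have huIcc : h u ∈ Set.Icc (0:ℝ) 1 := hIcc u (List.prefix_refl u) (by omega)
      have heq : (Finset.univ.sup' ⟨fun _ => .leaf, Finset.mem_univ _⟩
          fun c : Fin k → FullTree k D => weight h u (.node c))
          = h u * ∏ i, phi k h D (u ++ [i]) := by
        have : ∀ c : Fin k → FullTree k D,
            weight h u (.node c) = h u * ∏ i, weight h (u ++ [i]) (c i) :=
          fun c => weight_node h u c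
        erw [Finset.sup'_congr _ rfl fun c _ => this c]
        have hnn : ∀ (i : Fin k) (T : FullTree k D), 0 ≤ weight h (u ++ [i]) T := by
          intro i T
          refine weight_nonneg T fun s hp hl => ?_
          exact hIcc s ((u.prefix_append [i]).trans hp) (by simp at hl ⊢; omega)
        rw [← mul_sup' (h u) huIcc.1, sup'_prod_eq _ hnn]
        rw [Finset.prod_congr rfl fun i _ => hchild i]
      rw [heq, weight_leaf]
      rfl

/-- Sum of weights over all full subtrees is 1. -/
theorem sum_weight (h : List (Fin k) → ℝ) : ∀ (D : ℕ) (u : List (Fin k)),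
    (∀ s, u <+: s → s.length = u.length + D → h s = 0) →
    ∑ T : FullTree k D, weight h u T = 1
  | 0, u, h0 => by
      rw [sum_univ_zero, weight_leaf, h0 u (List.prefix_refl u) (by omega)]
      norm_num
  | D + 1, u, h0 => by
      rw [sum_succ, weight_leaf]
      have hstep : ∀ c : Fin k → FullTree k D,
          weight h u (.node c) = h u * ∏ i, weight h (u ++ [i]) (c i) :=
        fun c => weight_node h u c
      rw [Finset.sum_congr rfl fun c _ => hstep c, ← Finset.mul_sum]
      have : ∑ c : Fin k → FullTree k D, ∏ i, weight h (u ++ [i]) (c i)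
          = ∏ i : Fin k, ∑ T : FullTree k D, weight h (u ++ [i]) T := by
        classical
        rw [← Fintype.piFinset_univ, ← Finset.prod_univ_sum]
      rw [this]
      have hone : ∀ i : Fin k, ∑ T : FullTree k D, weight h (u ++ [i]) T = 1 := by
        intro i
        refine sum_weight h D (u ++ [i]) fun s hp hl => ?_
        exact h0 s ((u.prefix_append [i]).trans hp) (by simp at hl ⊢; omega)
      rw [Finset.prod_congr rfl fun i _ => hone i]
      simp

end FullTree
section QuadLemmas

variable (dmax : ℕ) {V : Type} (qt : ℕ → List (Fin 4) → V → ℝ)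
  (v : ℕ → V) (pix : ℕ → List (Fin 4))

theorem Qd_pos (hqt : ∀ t s x, 0 < qt t s x) (G : List (Fin 4) → ℝ)
    (hG : ∀ s, s.length ≤ dmax → G s ∈ Set.Icc (0:ℝ) 1) (t : ℕ) :
    ∀ j : ℕ, 0 < Qd dmax qt v pix G t j
  | 0 => hqt _ _ _
  | j + 1 => by
      have h1 : 0 < qt t ((pix t).take (dmax - (j + 1))) (v t) := hqt _ _ _
      have h2 : 0 < Qd dmax qt v pix G t j := Qd_pos hqt G hG t j
      have ha : G ((pix t).take (dmax - (j + 1))) ∈ Set.Icc (0:ℝ) 1 :=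
        hG _ (by rw [List.length_take]; omega)
      obtain ⟨ha0, ha1⟩ := ha
      show 0 < (1 - G ((pix t).take (dmax - (j + 1)))) * _ + G ((pix t).take (dmax - (j + 1))) * _
      rcases lt_or_eq_of_le ha1 with hlt | heq
      · have := mul_pos (by linarith : (0:ℝ) < 1 - G ((pix t).take (dmax - (j + 1)))) h1
        have := mul_nonneg ha0 h2.le
        linarith
      · rw [heq]; simpa using h2

theorem take_eq_of_prefix {α : Type*} {s l : List α} (h : s <+: l) :
    l.take s.length = s := (List.prefix_iff_eq_take.1 h).symm

theorem Qd_on_path (G : List (Fin 4) → ℝ) (t : ℕ) {s : List (Fin 4)}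
    (hs : s <+: pix t) (hlen : s.length < dmax) :
    Qd dmax qt v pix G t (dmax - s.length)
      = (1 - G s) * qt t s (v t) + G s * Qd dmax qt v pix G t (dmax - s.length - 1) := by
  have h1 : dmax - s.length = dmax - s.length - 1 + 1 := by omega
  rw [h1]
  show (1 - G ((pix t).take (dmax - (dmax - s.length - 1 + 1)))) * _
      + G ((pix t).take (dmax - (dmax - s.length - 1 + 1))) * _ = _
  have h2 : dmax - (dmax - s.length - 1 + 1) = s.length := by omega
  rw [h2, take_eq_of_prefix hs]
  have h3 : dmax - s.length - 1 + 1 - 1 = dmax - s.length - 1 := by omega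
  rw [h3]

theorem Gnext_eq_of_not (G : List (Fin 4) → ℝ) (t : ℕ) {s : List (Fin 4)}
    (hs : ¬(s <+: pix t ∧ s.length < dmax)) :
    Gnext dmax qt v pix G t s = G s := if_neg hs

theorem Gnext_eq_of_on (G : List (Fin 4) → ℝ) (t : ℕ) {s : List (Fin 4)}
    (h1 : s <+: pix t) (h2 : s.length < dmax) :
    Gnext dmax qt v pix G t s
      = G s * Qd dmax qt v pix G t (dmax - s.length - 1)
          / Qd dmax qt v pix G t (dmax - s.length) := if_pos ⟨h1, h2⟩

theorem Gnext_mem (hqt : ∀ t s x, 0 < qt t s x) (G : List (Fin 4) → ℝ)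
    (hG : ∀ s, s.length ≤ dmax → G s ∈ Set.Icc (0:ℝ) 1) (t : ℕ)
    (s : List (Fin 4)) (hs : s.length ≤ dmax) :
    Gnext dmax qt v pix G t s ∈ Set.Icc (0:ℝ) 1 := by
  by_cases hc : s <+: pix t ∧ s.length < dmax
  · rw [Gnext_eq_of_on dmax qt v pix G t hc.1 hc.2]
    have hP : 0 < Qd dmax qt v pix G t (dmax - s.length - 1) := Qd_pos dmax qt v pix hqt G hG t _
    have hQ : 0 < Qd dmax qt v pix G t (dmax - s.length) := Qd_pos dmax qt v pix hqt G hG t _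
    obtain ⟨h0, h1⟩ := hG s hs
    constructor
    · exact div_nonneg (mul_nonneg h0 hP.le) hQ.le
    · rw [div_le_one hQ, Qd_on_path dmax qt v pix G t hc.1 hc.2]
      have := mul_nonneg (by linarith : (0:ℝ) ≤ 1 - G s) (hqt t s (v t)).le
      linarith
  · rw [Gnext_eq_of_not dmax qt v pix G t hc]
    exact hG s hs

theorem Gnext_top (G : List (Fin 4) → ℝ) (t : ℕ) (s : List (Fin 4))
    (hs : s.length = dmax) (h0 : G s = 0) :
    Gnext dmax qt v pix G t s = 0 := by
  rw [Gnext_eq_of_not dmax qt v pix G t (fun hc => by omega)]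
  exact h0

theorem GT_mem (hqt : ∀ t s x, 0 < qt t s x) (g : List (Fin 4) → ℝ)
    (hg : ∀ s, s.length ≤ dmax → g s ∈ Set.Icc (0:ℝ) 1) :
    ∀ (t : ℕ) (s : List (Fin 4)), s.length ≤ dmax →
      GT dmax qt v pix g t s ∈ Set.Icc (0:ℝ) 1
  | 0, s, hs => hg s hs
  | t + 1, s, hs =>
      Gnext_mem dmax qt v pix hqt _ (fun s' hs' => GT_mem hqt g hg t s' hs') t s hs

theorem GT_top (g : List (Fin 4) → ℝ)
    (hg1 : ∀ s, s.length = dmax → g s = 0) :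
    ∀ (t : ℕ) (s : List (Fin 4)), s.length = dmax → GT dmax qt v pix g t s = 0
  | 0, s, hs => hg1 s hs
  | t + 1, s, hs =>
      Gnext_top dmax qt v pix _ t s hs (GT_top g hg1 t s hs)

end QuadLemmas
section MainStep

open FullTree

variable (dmax : ℕ) {V : Type} (qt : ℕ → List (Fin 4) → V → ℝ)
  (v : ℕ → V) (pix : ℕ → List (Fin 4))

theorem leafOf_leaf {k D : ℕ} (u : List (Fin k)) (p : List (Fin k)) :
    leafOf u (.leaf : FullTree k D) p = u := by
  cases p <;> rfl

theorem leafOf_node {k D : ℕ} (u : List (Fin k)) (c : Fin k → FullTree k D)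
    (i : Fin k) (p : List (Fin k)) :
    leafOf u (.node c) (i :: p) = leafOf (u ++ [i]) (c i) p := rfl

theorem weight_Gnext_off {D : ℕ} (G : List (Fin 4) → ℝ) (t : ℕ)
    (u : List (Fin 4)) (m : FullTree 4 D) (hu : ¬ u <+: pix t) :
    weight (Gnext dmax qt v pix G t) u m = weight G u m := by
  refine weight_congr u m fun s hs => ?_
  refine Gnext_eq_of_not dmax qt v pix G t fun hc => hu ?_
  -- u <+: s and s <+: pix t
  exact hs.trans hc.1

theorem weight_Gnext_mul (hqt : ∀ t s x, 0 < qt t s x) (G : List (Fin 4) → ℝ)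
    (hG : ∀ s, s.length ≤ dmax → G s ∈ Set.Icc (0:ℝ) 1) (t : ℕ)
    (hplen : (pix t).length = dmax) :
    ∀ {D : ℕ} (u : List (Fin 4)) (m : FullTree 4 D), u <+: pix t → u.length + D = dmax →
    weight (Gnext dmax qt v pix G t) u m * Qd dmax qt v pix G t D
      = weight G u m * qt t (leafOf u m ((pix t).drop u.length)) (v t)
  | 0, u, .leaf, hu, hlen => by
      have hupix : u = pix t := hu.eq_of_length (by omega)
      have hGn : Gnext dmax qt v pix G t u = G u :=
        Gnext_eq_of_not dmax qt v pix G t (fun hc => by omega)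
      have htake : (pix t).take (dmax - 0) = pix t := by
        rw [Nat.sub_zero, ← hplen, List.take_length]
      show (weight _ u FullTree.leaf) * qt t ((pix t).take (dmax - 0)) (v t) = _
      rw [htake, weight_leaf, weight_leaf, hGn, leafOf_leaf, hupix]
  | D + 1, u, .leaf, hu, hlen => by
      have hlt : u.length < dmax := by omega
      have hD1 : dmax - u.length = D + 1 := by omega
      have hD : dmax - u.length - 1 = D := by omega
      have hQ : 0 < Qd dmax qt v pix G t (D + 1) :=
        Qd_pos dmax qt v pix hqt G hG t _
      have hrec : Qd dmax qt v pix G t (D + 1)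
          = (1 - G u) * qt t u (v t) + G u * Qd dmax qt v pix G t D := by
        have := Qd_on_path dmax qt v pix G t hu hlt
        rw [hD1] at this
        simpa using this
      have hGn : Gnext dmax qt v pix G t u
          = G u * Qd dmax qt v pix G t D / Qd dmax qt v pix G t (D + 1) := by
        rw [Gnext_eq_of_on dmax qt v pix G t hu hlt, hD1]
        simp
      rw [weight_leaf, weight_leaf, hGn, leafOf_leaf]
      show (1 - G u * Qd dmax qt v pix G t D / Qd dmax qt v pix G t (D + 1))
          * Qd dmax qt v pix G t (D + 1) = (1 - G u) * qt t u (v t)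
      field_simp
      linarith [hrec]
  | D + 1, u, .node c, hu, hlen => by
      have hlt : u.length < dmax := by omega
      have hltp : u.length < (pix t).length := by omega
      have hD1 : dmax - u.length = D + 1 := by omega
      have hD : dmax - u.length - 1 = D := by omega
      set i₀ : Fin 4 := (pix t)[u.length] with hi₀
      have hdrop : (pix t).drop u.length = i₀ :: (pix t).drop (u.length + 1) :=
        List.drop_eq_getElem_cons hltp
      have hutake : u = (pix t).take u.length := List.prefix_iff_eq_take.1 hu
      have hpre : u ++ [i₀] <+: pix t := by
        have : (pix t).take (u.length + 1) = u ++ [i₀] := by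
          rw [List.take_succ, ← hutake, List.getElem?_eq_getElem hltp]
          rfl
        rw [← this]
        exact List.take_prefix _ _
      have hoff : ∀ i : Fin 4, i ≠ i₀ → ¬ (u ++ [i]) <+: pix t := by
        intro i hi hpre'
        have e1 := FullTree.getElem?_of_append_singleton_prefix hpre'
        have e2 := FullTree.getElem?_of_append_singleton_prefix hpre
        rw [e1] at e2
        exact hi (Option.some_injective _ e2)
      have hQ : 0 < Qd dmax qt v pix G t (D + 1) :=
        Qd_pos dmax qt v pix hqt G hG t _
      have hGn : Gnext dmax qt v pix G t u
          = G u * Qd dmax qt v pix G t D / Qd dmax qt v pix G t (D + 1) := by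
        rw [Gnext_eq_of_on dmax qt v pix G t hu hlt, hD1]
        simp
      -- split products over i = i₀ and the rest
      have hsplit : ∀ h : List (Fin 4) → ℝ,
          weight h u (.node c) = h u * (weight h (u ++ [i₀]) (c i₀) *
            ∏ i ∈ Finset.univ.erase i₀, weight h (u ++ [i]) (c i)) := by
        intro h
        rw [weight_node, ← Finset.mul_prod_erase Finset.univ
          (fun i => weight h (u ++ [i]) (c i)) (Finset.mem_univ i₀)]
      have hIH : weight (Gnext dmax qt v pix G t) (u ++ [i₀]) (c i₀)
            * Qd dmax qt v pix G t D
          = weight G (u ++ [i₀]) (c i₀)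
            * qt t (leafOf (u ++ [i₀]) (c i₀) ((pix t).drop (u.length + 1))) (v t) := by
        have := weight_Gnext_mul hqt G hG t hplen (u ++ [i₀]) (c i₀) hpre (by simp; omega)
        rwa [List.length_append, List.length_singleton] at this
      have hrest : ∀ i ∈ Finset.univ.erase i₀,
          weight (Gnext dmax qt v pix G t) (u ++ [i]) (c i) = weight G (u ++ [i]) (c i) := by
        intro i hi
        exact weight_Gnext_off dmax qt v pix G t _ _ (hoff i (Finset.ne_of_mem_erase hi))
      have hleafOf : leafOf u (.node c) ((pix t).drop u.length)
          = leafOf (u ++ [i₀]) (c i₀) ((pix t).drop (u.length + 1)) := by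
        rw [hdrop]
        rfl
      rw [hsplit, hsplit, hGn, hleafOf,
        Finset.prod_congr rfl hrest]
      have hQne : Qd dmax qt v pix G t (D + 1) ≠ 0 := ne_of_gt hQ
      field_simp
      linear_combination (G u * (∏ x ∈ Finset.univ.erase i₀, weight G (u ++ [x]) (c x))) * hIH

end MainStep
/-- (i) For the complete `k`-ary tree of depth `D` with parameters
`h_u ∈ [0,1]` vanishing at depth `D`, the maximum over all full subtrees `T` of the weight
`∏_{u ∈ L^T} (1 - h u) ∏_{u' ∈ I^T} h u'` equals `φ(λ) = phi k h D []`.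
(ii) In particular, for the quadtree mixture algorithm (`k = 4`), with `h` taken to be the
sequentially updated weights `g_{·|t} = GT dmax qt v pix g (t+1)`, the maximum a posteriori
model probability `max_m p(m | v^t)` (the posterior being
`p(m | v^t) = p(m) p(v^t | m) / ∑_{m'} p(m') p(v^{t} | m')`) equals `φ_t(s_λ)`. -/
theorem stmt12
    -- general k-ary part
    (k D : ℕ) (hk : 1 ≤ k) (h : List (Fin k) → ℝ)
    (hh : ∀ u : List (Fin k), u.length ≤ D → h u ∈ Set.Icc (0 : ℝ) 1)
    (hhD : ∀ u : List (Fin k), u.length = D → h u = 0)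
    -- quadtree mixture algorithm part
    (dmax : ℕ) (V : Type) [Fintype V]
    (g : List (Fin 4) → ℝ)
    (hg : ∀ s : List (Fin 4), s.length ≤ dmax → g s ∈ Set.Icc (0 : ℝ) 1)
    (hg1 : ∀ s : List (Fin 4), s.length = dmax → g s = 0)
    (qt : ℕ → List (Fin 4) → V → ℝ)
    (hqt : ∀ t s x, 0 < qt t s x)
    (hqts : ∀ t s, ∑ x : V, qt t s x = 1)
    (v : ℕ → V) (pix : ℕ → List (Fin 4))
    (hpix : ∀ i, (pix i).length = dmax)
    (hinj : ∀ i j, i < 4 ^ dmax → j < 4 ^ dmax → pix i = pix j → i = j)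
    (t : ℕ) (ht : t < 4 ^ dmax) :
    (Finset.univ.sup' ⟨FullTree.leaf, Finset.mem_univ _⟩
        (fun T : FullTree k D => FullTree.weight h [] T)
      = phi k h D [])
    ∧ (Finset.univ.sup' ⟨FullTree.leaf, Finset.mem_univ _⟩
        (fun m : FullTree 4 dmax =>
          FullTree.weight g [] m * like dmax qt v pix m (t + 1)
            / ∑ m' : FullTree 4 dmax,
                FullTree.weight g [] m' * like dmax qt v pix m' (t + 1))
      = phi 4 (GT dmax qt v pix g (t + 1)) dmax []) := by
  classical
  constructor
  · -- part (i)
    exact FullTree.sup'_weight h D []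
      (fun s _ hl => hh s (by simpa using hl))
      (fun s _ hl => hhD s (by simpa using hl))
  · -- part (ii)
    have hg' : ∀ s : List (Fin 4), s.length ≤ dmax → g s ∈ Set.Icc (0:ℝ) 1 := hg
    have hGmem : ∀ (τ : ℕ) (s : List (Fin 4)), s.length ≤ dmax →
        GT dmax qt v pix g τ s ∈ Set.Icc (0:ℝ) 1 :=
      fun τ => GT_mem dmax qt v pix hqt g hg' τ
    have hGtop : ∀ (τ : ℕ) (s : List (Fin 4)), s.length = dmax →
        GT dmax qt v pix g τ s = 0 :=
      fun τ => GT_top dmax qt v pix g hg1 τ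
    set Z : ℕ → ℝ := fun i => Qd dmax qt v pix (GT dmax qt v pix g i) i dmax with hZ
    have hZpos : ∀ i, 0 < Z i := fun i =>
      Qd_pos dmax qt v pix hqt _ (hGmem i) i dmax
    have hstep : ∀ (τ : ℕ) (m : FullTree 4 dmax),
        FullTree.weight (GT dmax qt v pix g (τ + 1)) [] m * Z τ
          = FullTree.weight (GT dmax qt v pix g τ) [] m
            * qt τ (FullTree.leafOf [] m (pix τ)) (v τ) := by
      intro τ m
      have := weight_Gnext_mul dmax qt v pix hqt (GT dmax qt v pix g τ) (hGmem τ) τ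
        (hpix τ) [] m List.nil_prefix (by simp)
      simpa [GT] using this
    have hcum : ∀ (τ : ℕ) (m : FullTree 4 dmax),
        FullTree.weight g [] m * like dmax qt v pix m τ
          = FullTree.weight (GT dmax qt v pix g τ) [] m * ∏ i ∈ Finset.range τ, Z i := by
      intro τ
      induction τ with
      | zero => intro m; simp [like, GT]
      | succ τ ih =>
          intro m
          have hlike : like dmax qt v pix m (τ + 1)
              = like dmax qt v pix m τ * qt τ (FullTree.leafOf [] m (pix τ)) (v τ) := by
            unfold like
            rw [Finset.prod_range_succ]
          rw [hlike, Finset.prod_range_succ, ← mul_assoc, ih m]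
          linear_combination (-(∏ i ∈ Finset.range τ, Z i)) * hstep τ m
    have hsum1 : ∑ m' : FullTree 4 dmax, FullTree.weight (GT dmax qt v pix g (t + 1)) [] m' = 1 :=
      FullTree.sum_weight _ dmax [] (fun s _ hl => hGtop (t + 1) s (by simpa using hl))
    have hS : ∑ m' : FullTree 4 dmax, FullTree.weight g [] m' * like dmax qt v pix m' (t + 1)
        = ∏ i ∈ Finset.range (t + 1), Z i := by
      rw [Finset.sum_congr rfl (fun m _ => hcum (t + 1) m), ← Finset.sum_mul, hsum1, one_mul]
    have hPpos : 0 < ∏ i ∈ Finset.range (t + 1), Z i :=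
      Finset.prod_pos fun i _ => hZpos i
    have hpost : ∀ m : FullTree 4 dmax,
        FullTree.weight g [] m * like dmax qt v pix m (t + 1)
            / ∑ m' : FullTree 4 dmax, FullTree.weight g [] m' * like dmax qt v pix m' (t + 1)
          = FullTree.weight (GT dmax qt v pix g (t + 1)) [] m := by
      intro m
      rw [hS, hcum (t + 1) m, mul_div_assoc, div_self (ne_of_gt hPpos), mul_one]
    erw [Finset.sup'_congr _ rfl (fun m _ => hpost m)]
    exact FullTree.sup'_weight _ dmax []
      (fun s _ hl => hGmem (t + 1) s (by simpa using hl))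
      (fun s _ hl => hGtop (t + 1) s (by simpa using hl))
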